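/- Free-energy decay along classical solutions of the deterministic gradient flow: let L > 0, let f : ℝ → ℝ be twice continuously differentiable, let V : ℝ → ℝ be continuously differentiable and L-periodic, let W : ℝ → ℝ be continuous, even and L-periodic, and let ρ : ℝ × ℝ → ℝ be twice continuously differentiable, L-periodic in the spatial variable x, with ρ(t, x) > 0 for all t, x, satisfying the deterministic equation ∂ₜρ = ∂ₓ(ρ ∂ₓ ξ) with ξ(t, x) = f'(ρ(t, x)) + V(x) + ∫₀ᴸ W(x − y) ρ(t, y) dy. Then for every t, the free energy E(t) = ∫₀ᴸ [f(ρ(t, x)) + V(x) ρ(t, x) + (1/2)(∫₀ᴸ W(x − y) ρ(t, y) dy) ρ(t, x)] dx is differentiable in t and satisfies dE/dt = −∫₀ᴸ ρ(t, x)·(∂ₓξ(t, x))² dx; in particular E is nonincreasing in time. -/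

import Mathlib

open MeasureTheory intervalIntegral

/-- Differentiation under the interval integral sign, for jointly continuous
integrand and derivative. -/
lemma hasDerivAt_param_integral (a b : ℝ) {φ ψ : ℝ → ℝ → ℝ}
    (hφ : Continuous fun p : ℝ × ℝ => φ p.1 p.2)
    (hψ : Continuous fun p : ℝ × ℝ => ψ p.1 p.2)
    (hd : ∀ t x, HasDerivAt (fun s => φ s x) (ψ t x) t) (t₀ : ℝ) :
    HasDerivAt (fun s => ∫ x in a..b, φ s x) (∫ x in a..b, ψ t₀ x) t₀ := by
  obtain ⟨C, hC⟩ := (isCompact_Icc.prod isCompact_uIcc :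
      IsCompact (Set.Icc (t₀ - 1) (t₀ + 1) ×ˢ Set.uIcc a b)).exists_bound_of_continuousOn
    hψ.continuousOn
  refine (intervalIntegral.hasDerivAt_integral_of_dominated_loc_of_deriv_le
    (F := φ) (F' := ψ) (bound := fun _ => C) (s := Metric.ball t₀ 1) (Metric.ball_mem_nhds t₀ one_pos) ?_ ?_ ?_ ?_ ?_ ?_).2
  · exact Filter.Eventually.of_forall fun s =>
      ((hφ.comp (Continuous.prodMk_right s)).aestronglyMeasurable)
  · exact ((hφ.comp (Continuous.prodMk_right t₀))).intervalIntegrable a b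
  · exact ((hψ.comp (Continuous.prodMk_right t₀))).aestronglyMeasurable
  · refine Filter.Eventually.of_forall fun x hx s hs => ?_
    have hs' : s ∈ Set.Icc (t₀ - 1) (t₀ + 1) := by
      rw [Metric.mem_ball, Real.dist_eq] at hs
      constructor <;> [linarith [neg_abs_le (s - t₀)]; linarith [le_abs_self (s - t₀)]]
    exact hC (s, x) (Set.mk_mem_prod hs' (Set.uIoc_subset_uIcc hx))
  · exact intervalIntegrable_const
  · exact Filter.Eventually.of_forall fun x _ s _ => hd s x

/-- Fubini for continuous integrands on a square. -/
lemma swap_param_integral {L : ℝ} (hL : 0 ≤ L) {H : ℝ → ℝ → ℝ}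
    (hH : Continuous fun p : ℝ × ℝ => H p.1 p.2) :
    ∫ x in (0:ℝ)..L, ∫ y in (0:ℝ)..L, H x y = ∫ y in (0:ℝ)..L, ∫ x in (0:ℝ)..L, H x y := by
  have hInt : Integrable (Function.uncurry H)
      ((volume.restrict (Set.Ioc 0 L)).prod (volume.restrict (Set.Ioc 0 L))) := by
    rw [Measure.prod_restrict]
    have : IntegrableOn (Function.uncurry H) (Set.Icc (0:ℝ) L ×ˢ Set.Icc (0:ℝ) L)
        (volume.prod volume) := by
      rw [← Measure.volume_eq_prod]
      exact ContinuousOn.integrableOn_compact (isCompact_Icc.prod isCompact_Icc)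
        hH.continuousOn
    exact this.mono_set (Set.prod_mono Set.Ioc_subset_Icc_self Set.Ioc_subset_Icc_self)
  simp only [intervalIntegral.integral_of_le hL]
  exact MeasureTheory.integral_integral_swap hInt

theorem free_energy_decay_gradient_flow
    (L : ℝ) (hL : 0 < L)
    (f V W : ℝ → ℝ)
    (hf : ContDiff ℝ 2 f)
    (hV : ContDiff ℝ 1 V) (hVper : Function.Periodic V L)
    (hW : Continuous W) (hWeven : ∀ x, W (-x) = W x) (hWper : Function.Periodic W L)
    (ρ : ℝ → ℝ → ℝ)
    (hρ : ContDiff ℝ 2 (fun p : ℝ × ℝ => ρ p.1 p.2))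
    (hρper : ∀ t x, ρ t (x + L) = ρ t x)
    (hρpos : ∀ t x, 0 < ρ t x)
    (ξ : ℝ → ℝ → ℝ)
    (hξ : ∀ t x, ξ t x = deriv f (ρ t x) + V x + ∫ y in (0:ℝ)..L, W (x - y) * ρ t y)
    (ξx : ℝ → ℝ → ℝ)
    (hξx : ∀ t x, HasDerivAt (fun x' => ξ t x') (ξx t x) x)
    (F : ℝ → ℝ → ℝ)
    (hF : ∀ t x, HasDerivAt (fun x' => ρ t x' * ξx t x') (F t x) x)
    (hpde : ∀ t x, HasDerivAt (fun s => ρ s x) (F t x) t)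
    (E : ℝ → ℝ)
    (hE : ∀ t, E t = ∫ x in (0:ℝ)..L,
        (f (ρ t x) + V x * ρ t x
          + (1 / 2) * (∫ y in (0:ℝ)..L, W (x - y) * ρ t y) * ρ t x)) :
    (∀ t, HasDerivAt E (-(∫ x in (0:ℝ)..L, ρ t x * (ξx t x) ^ 2)) t)
    ∧ ∀ s t : ℝ, s ≤ t → E t ≤ E s := by
  -- Basic continuity facts
  have hρcont : Continuous fun p : ℝ × ℝ => ρ p.1 p.2 := hρ.continuous
  have hfd : Differentiable ℝ f := hf.differentiable two_ne_zero
  have hdfcont : Continuous (deriv f) := hf.continuous_deriv one_le_two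
  have hVcont : Continuous V := hV.continuous
  -- F equals the time partial derivative of ρ, hence jointly continuous
  have hFeq : ∀ t x, F t x =
      fderiv ℝ (fun p : ℝ × ℝ => ρ p.1 p.2) (t, x) (1, 0) := by
    intro t x
    have hline : HasDerivAt (fun s : ℝ => (s, x)) ((1:ℝ), (0:ℝ)) t :=
      (hasDerivAt_id t).prodMk (hasDerivAt_const t x)
    have h1 : HasDerivAt (fun s => ρ s x)
        (fderiv ℝ (fun p : ℝ × ℝ => ρ p.1 p.2) (t, x) (1, 0)) t :=
      by have := ((hρ.differentiable two_ne_zero) (t, x)).hasFDerivAt.comp_hasDerivAt t hline; exact this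
    exact (hpde t x).unique h1
  have hFcont : Continuous fun p : ℝ × ℝ => F p.1 p.2 := by
    have : Continuous fun p : ℝ × ℝ =>
        fderiv ℝ (fun q : ℝ × ℝ => ρ q.1 q.2) p ((1:ℝ), (0:ℝ)) :=
      (hρ.continuous_fderiv two_ne_zero).clm_apply continuous_const
    refine this.congr fun p => ?_
    exact (hFeq p.1 p.2).symm
  -- Convolution terms
  set K : ℝ → ℝ → ℝ := fun t x => ∫ y in (0:ℝ)..L, W (x - y) * ρ t y with hKdef
  set G : ℝ → ℝ → ℝ := fun t x => ∫ y in (0:ℝ)..L, W (x - y) * F t y with hGdef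
  have hKcont : Continuous fun p : ℝ × ℝ => K p.1 p.2 := by
    apply intervalIntegral.continuous_parametric_intervalIntegral_of_continuous'
      (f := fun (p : ℝ × ℝ) y => W (p.2 - y) * ρ p.1 y)
    exact (hW.comp (continuous_fst.snd.sub continuous_snd)).mul
      (hρcont.comp (continuous_fst.fst.prodMk continuous_snd))
  have hGcont : Continuous fun p : ℝ × ℝ => G p.1 p.2 := by
    apply intervalIntegral.continuous_parametric_intervalIntegral_of_continuous'
      (f := fun (p : ℝ × ℝ) y => W (p.2 - y) * F p.1 y)
    exact (hW.comp (continuous_fst.snd.sub continuous_snd)).mul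
      (hFcont.comp (continuous_fst.fst.prodMk continuous_snd))
  have hKderiv : ∀ t x, HasDerivAt (fun s => K s x) (G t x) t := by
    intro t x
    apply hasDerivAt_param_integral 0 L
      (φ := fun s y => W (x - y) * ρ s y) (ψ := fun s y => W (x - y) * F s y)
    · exact (hW.comp (continuous_const.sub continuous_snd)).mul hρcont
    · exact (hW.comp (continuous_const.sub continuous_snd)).mul hFcont
    · intro s y
      exact (hpde s y).const_mul (W (x - y))
  -- slice continuity
  have hρxc : ∀ t, Continuous fun x => ρ t x := fun t => hρcont.comp (Continuous.prodMk_right t)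
  have hFxc : ∀ t, Continuous fun x => F t x := fun t => hFcont.comp (Continuous.prodMk_right t)
  have hKxc : ∀ t, Continuous fun x => K t x := fun t => hKcont.comp (Continuous.prodMk_right t)
  have hGxc : ∀ t, Continuous fun x => G t x := fun t => hGcont.comp (Continuous.prodMk_right t)
  have hξc : ∀ t, Continuous fun x => ξ t x := by
    intro t
    have : (fun x => ξ t x) = fun x => deriv f (ρ t x) + V x + K t x :=
      funext fun x => hξ t x
    rw [this]
    exact ((hdfcont.comp (hρxc t)).add hVcont).add (hKxc t)
  -- E has derivative ∫ Ψ t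
  set Φ : ℝ → ℝ → ℝ := fun t x =>
    f (ρ t x) + V x * ρ t x + (1 / 2) * K t x * ρ t x with hΦdef
  set Ψ : ℝ → ℝ → ℝ := fun t x =>
    deriv f (ρ t x) * F t x + V x * F t x
      + ((1 / 2) * G t x * ρ t x + (1 / 2) * K t x * F t x) with hΨdef
  have hΦcont : Continuous fun p : ℝ × ℝ => Φ p.1 p.2 := by
    exact ((hf.continuous.comp hρcont).add
        ((hVcont.comp continuous_snd).mul hρcont)).add
      ((continuous_const.mul hKcont).mul hρcont)
  have hΨcont : Continuous fun p : ℝ × ℝ => Ψ p.1 p.2 := by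
    exact (((hdfcont.comp hρcont).mul hFcont).add
        ((hVcont.comp continuous_snd).mul hFcont)).add
      (((continuous_const.mul hGcont).mul hρcont).add
        ((continuous_const.mul hKcont).mul hFcont))
  have hΦd : ∀ t x, HasDerivAt (fun s => Φ s x) (Ψ t x) t := by
    intro t x
    have h1 : HasDerivAt (fun s => f (ρ s x)) (deriv f (ρ t x) * F t x) t :=
      ((hfd (ρ t x)).hasDerivAt).comp t (hpde t x)
    have h2 : HasDerivAt (fun s => V x * ρ s x) (V x * F t x) t :=
      (hpde t x).const_mul (V x)
    have h3 : HasDerivAt (fun s => (1 / 2) * K s x * ρ s x)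
        ((1 / 2) * G t x * ρ t x + (1 / 2) * K t x * F t x) t :=
      ((hKderiv t x).const_mul (1 / 2)).mul (hpde t x)
    exact (h1.add h2).add h3
  have hEfun : E = fun t => ∫ x in (0:ℝ)..L, Φ t x := funext fun t => hE t
  have hE' : ∀ t, HasDerivAt E (∫ x in (0:ℝ)..L, Ψ t x) t := by
    intro t
    have := hasDerivAt_param_integral 0 L hΦcont hΨcont hΦd t
    rwa [← hEfun] at this
  -- The key identity: ∫ Ψ t = -∫ ρ ξx²
  have key : ∀ t, (∫ x in (0:ℝ)..L, Ψ t x)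
      = -(∫ x in (0:ℝ)..L, ρ t x * (ξx t x) ^ 2) := by
    intro t
    -- Fubini / symmetry step: ∫ G ρ = ∫ K F
    have hsym : (∫ x in (0:ℝ)..L, G t x * ρ t x)
        = ∫ x in (0:ℝ)..L, K t x * F t x := by
      have h1 : ∀ x, G t x * ρ t x
          = ∫ y in (0:ℝ)..L, W (x - y) * F t y * ρ t x := by
        intro x
        rw [← intervalIntegral.integral_mul_const]
      have h2 : (∫ x in (0:ℝ)..L, ∫ y in (0:ℝ)..L, W (x - y) * F t y * ρ t x)
          = ∫ y in (0:ℝ)..L, ∫ x in (0:ℝ)..L, W (x - y) * F t y * ρ t x := by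
        apply swap_param_integral hL.le
        exact ((hW.comp (continuous_fst.sub continuous_snd)).mul
          ((hFxc t).comp continuous_snd)).mul ((hρxc t).comp continuous_fst)
      have h3 : ∀ y, (∫ x in (0:ℝ)..L, W (x - y) * F t y * ρ t x)
          = K t y * F t y := by
        intro y
        have : ∀ x, W (x - y) * F t y * ρ t x = (W (y - x) * ρ t x) * F t y := by
          intro x
          have : W (x - y) = W (y - x) := by
            rw [← hWeven (y - x)]; ring_nf
          rw [this]; ring
        rw [intervalIntegral.integral_congr fun x _ => this x,
          intervalIntegral.integral_mul_const]
      calc (∫ x in (0:ℝ)..L, G t x * ρ t x)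
          = ∫ x in (0:ℝ)..L, ∫ y in (0:ℝ)..L, W (x - y) * F t y * ρ t x :=
            intervalIntegral.integral_congr fun x _ => h1 x
        _ = ∫ y in (0:ℝ)..L, ∫ x in (0:ℝ)..L, W (x - y) * F t y * ρ t x := h2
        _ = ∫ y in (0:ℝ)..L, K t y * F t y :=
            intervalIntegral.integral_congr fun y _ => h3 y
    -- split Ψ
    have hΨsplit : ∀ x, Ψ t x = ξ t x * F t x
        + ((1 / 2) * (G t x * ρ t x) - (1 / 2) * (K t x * F t x)) := by
      intro x
      rw [hΨdef]
      simp only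
      rw [hξ t x]
      have : (∫ y in (0:ℝ)..L, W (x - y) * ρ t y) = K t x := rfl
      rw [this]; ring
    have hintΨ : (∫ x in (0:ℝ)..L, Ψ t x) = ∫ x in (0:ℝ)..L, ξ t x * F t x := by
      rw [intervalIntegral.integral_congr fun x _ => hΨsplit x]
      rw [intervalIntegral.integral_add (((hξc t).fun_mul (hFxc t)).intervalIntegrable 0 L)
        (((continuous_const.fun_mul ((hGxc t).fun_mul (hρxc t))).fun_sub
          (continuous_const.fun_mul ((hKxc t).fun_mul (hFxc t)))).intervalIntegrable 0 L)]
      rw [intervalIntegral.integral_sub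
        ((continuous_const.fun_mul ((hGxc t).fun_mul (hρxc t))).intervalIntegrable 0 L)
        ((continuous_const.fun_mul ((hKxc t).fun_mul (hFxc t))).intervalIntegrable 0 L)]
      rw [intervalIntegral.integral_const_mul, intervalIntegral.integral_const_mul, hsym]
      ring
    -- periodicity of ξ and ξx
    have hξper : ∀ x, ξ t (x + L) = ξ t x := by
      intro x
      rw [hξ t (x + L), hξ t x, hρper, hVper x]
      congr 1
      apply intervalIntegral.integral_congr
      intro y _
      show W (x + L - y) * ρ t y = W (x - y) * ρ t y
      have h : x + L - y = x - y + L := by ring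
      rw [h, hWper (x - y)]
    have hξxper : ∀ x, ξx t (x + L) = ξx t x := by
      intro x
      have hshift : HasDerivAt (fun x' => ξ t (x' + L)) (ξx t (x + L) * 1) x :=
        (hξx t (x + L)).comp x ((hasDerivAt_id x).add_const L)
      have : (fun x' => ξ t (x' + L)) = fun x' => ξ t x' := funext fun x' => hξper x'
      rw [this, mul_one] at hshift
      exact hshift.unique (hξx t x)
    -- continuity of ξx t
    have hprodc : Continuous fun x => ρ t x * ξx t x :=
      Differentiable.continuous fun x => (hF t x).differentiableAt
    have hξxc : Continuous fun x => ξx t x := by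
      have heq : (fun x => ξx t x) = fun x => (ρ t x * ξx t x) / ρ t x := by
        funext x
        rw [mul_comm, mul_div_assoc, div_self (hρpos t x).ne', mul_one]
      rw [heq]
      exact hprodc.div (hρxc t) fun x => (hρpos t x).ne'
    -- integration by parts
    have ibp := intervalIntegral.integral_deriv_mul_eq_sub_of_hasDerivAt
      (u := fun x => ξ t x) (v := fun x => ρ t x * ξx t x)
      (u' := fun x => ξx t x) (v' := fun x => F t x)
      (a := 0) (b := L)
      (hξc t).continuousOn hprodc.continuousOn
      (fun x _ => hξx t x) (fun x _ => hF t x)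
      (hξxc.intervalIntegrable 0 L) ((hFxc t).intervalIntegrable 0 L)
    have hbdry : ξ t L * (ρ t L * ξx t L) - ξ t 0 * (ρ t 0 * ξx t 0) = 0 := by
      have h0 : ξ t L = ξ t 0 := by
        have := hξper 0; rwa [zero_add] at this
      have h1 : ρ t L = ρ t 0 := by
        have := hρper t 0; rwa [zero_add] at this
      have h2 : ξx t L = ξx t 0 := by
        have := hξxper 0; rwa [zero_add] at this
      rw [h0, h1, h2]; ring
    rw [hbdry] at ibp
    have hsplit2 : (∫ x in (0:ℝ)..L,
        ξx t x * (ρ t x * ξx t x) + ξ t x * F t x)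
        = (∫ x in (0:ℝ)..L, ρ t x * (ξx t x) ^ 2)
          + ∫ x in (0:ℝ)..L, ξ t x * F t x := by
      rw [← intervalIntegral.integral_add ((hρxc t).fun_mul (hξxc.fun_pow 2) |>.intervalIntegrable 0 L)
        (((hξc t).fun_mul (hFxc t)).intervalIntegrable 0 L)]
      apply intervalIntegral.integral_congr
      intro x _
      ring
    rw [hsplit2] at ibp
    rw [hintΨ]
    linarith
  -- conclude
  have hmain : ∀ t, HasDerivAt E (-(∫ x in (0:ℝ)..L, ρ t x * (ξx t x) ^ 2)) t := by
    intro t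
    have := hE' t
    rwa [key t] at this
  refine ⟨hmain, ?_⟩
  intro s t hst
  have hdiff : Differentiable ℝ E := fun t => (hmain t).differentiableAt
  have hanti : Antitone E := by
    apply antitone_of_deriv_nonpos hdiff
    intro t
    rw [(hmain t).deriv]
    have : (0:ℝ) ≤ ∫ x in (0:ℝ)..L, ρ t x * (ξx t x) ^ 2 :=
      intervalIntegral.integral_nonneg hL.le fun x _ =>
        mul_nonneg (hρpos t x).le (sq_nonneg _)
    linarith
  exact hanti hst
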